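/- For every finite non-empty S ⊂ ℤ, the covering density τ(S) is a rational number, and there exists a periodic set T ⊆ ℤ with T + S = ℤ whose density equals τ(S). -/

import Mathlib

open Pointwise

/-- `τ(S,n)`: the minimal number of integer translates of `S` covering `{1,...,n}`. -/
noncomputable def tauZ (S : Finset ℤ) (n : ℕ) : ℕ :=
  sInf {m | ∃ T : Finset ℤ, T.card = m ∧ Finset.Icc (1 : ℤ) n ⊆ T + S}

/-- The covering density `τ(S)` of a finite set `S ⊂ ℤ`, as the infimum of `τ(S,n)/n`. -/
noncomputable def covDens (S : Finset ℤ) : ℝ :=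
  ⨅ n : ℕ+, (tauZ S n : ℝ) / n

namespace CovAux

/-- Coverage of `ℤ` by the `p`-periodization of the finite set `B`, translated by `S`. -/
def Cov (S : Finset ℤ) (p : ℤ) (B : Finset ℤ) : Prop :=
  ∀ x : ℤ, ∃ u ∈ B, ∃ s ∈ S, p ∣ (x - u - s)

lemma cov_norm {S : Finset ℤ} {p : ℤ} (hp : 0 < p) {B : Finset ℤ} (h : Cov S p B) :
    Cov S p (B.image (· % p)) ∧ (B.image (· % p)) ⊆ Finset.Ico 0 p ∧
      (B.image (· % p)).card ≤ B.card := by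
  refine ⟨?_, ?_, Finset.card_image_le⟩
  · intro x
    obtain ⟨u, hu, s, hs, hd⟩ := h x
    refine ⟨u % p, Finset.mem_image_of_mem _ hu, s, hs, ?_⟩
    have h2 : p ∣ u - u % p := Int.dvd_self_sub_emod
    have : x - u % p - s = (x - u - s) + (u - u % p) := by ring
    rw [this]
    exact dvd_add hd h2
  · intro y hy
    simp only [Finset.mem_image] at hy
    obtain ⟨u, _, rfl⟩ := hy
    simp [Finset.mem_Ico, Int.emod_nonneg _ hp.ne', Int.emod_lt_of_pos _ hp]

end CovAux

namespace CovAux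

lemma splice {S : Finset ℤ} {p : ℤ} {B : Finset ℤ} (hCov : Cov S p B)
    {a b : ℤ} (ha : ∀ s ∈ S, a ≤ s) (hb : ∀ s ∈ S, s ≤ b)
    {i j : ℤ} (hij : i < j)
    (hprof : ∀ u, 0 < u → u ≤ b - a →
      ((∃ v ∈ B, p ∣ (i + u - v)) ↔ (∃ v ∈ B, p ∣ (j + u - v)))) :
    Cov S (j - i) ((Finset.Ioc i j).filter (fun t => ∃ v ∈ B, p ∣ (t - v))) := by
  classical
  set q := j - i with hqdef
  have hq : 0 < q := by omega
  set F := (Finset.Ioc i j).filter (fun t => ∃ v ∈ B, p ∣ (t - v)) with hF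
  have claim : ∀ n : ℕ, ∀ t : ℤ, (t - i).toNat = n → i < t → t ≤ j + (b - a) →
      (∃ v ∈ B, p ∣ t - v) → ∃ t'' ∈ F, q ∣ t - t'' := by
    intro n
    induction n using Nat.strong_induction_on with
    | _ n ih =>
      intro t hn hti htj hmem
      by_cases htle : t ≤ j
      · exact ⟨t, Finset.mem_filter.2 ⟨Finset.mem_Ioc.2 ⟨hti, htle⟩, hmem⟩, by simp⟩
      · push_neg at htle
        have hu1 : 0 < t - j := by omega
        have hu2 : t - j ≤ b - a := by omega
        have hmemj : ∃ v ∈ B, p ∣ (j + (t - j) - v) := by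
          obtain ⟨v, hv, hd⟩ := hmem
          exact ⟨v, hv, by rw [show j + (t - j) - v = t - v from by ring]; exact hd⟩
        obtain ⟨v, hv, hd⟩ := (hprof (t - j) hu1 hu2).2 hmemj
        set t' := i + (t - j) with ht'
        have hmem' : ∃ v ∈ B, p ∣ t' - v := ⟨v, hv, hd⟩
        obtain ⟨t'', htF, hdvd⟩ := ih (t' - i).toNat (by omega) t' rfl (by omega)
          (by omega) hmem'
        refine ⟨t'', htF, ?_⟩
        have : t - t'' = (t' - t'') + q := by omega
        rw [this]
        exact dvd_add hdvd dvd_rfl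
  intro x
  set x' := i + b + 1 + (x - i - b - 1) % q with hx'
  have hmod := Int.emod_nonneg (x - i - b - 1) hq.ne'
  have hmod2 := Int.emod_lt_of_pos (x - i - b - 1) hq
  have hxx' : q ∣ x - x' := by
    have : x - x' = (x - i - b - 1) - (x - i - b - 1) % q := by omega
    rw [this]
    exact Int.dvd_self_sub_emod
  obtain ⟨v, hv, s, hs, hd⟩ := hCov x'
  have hta : i < x' - s := by have := hb s hs; omega
  have htb : x' - s ≤ j + (b - a) := by have := ha s hs; omega
  obtain ⟨t'', htF, hdvd⟩ := claim _ (x' - s) rfl hta htb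
    ⟨v, hv, by rw [show x' - s - v = x' - v - s from by ring]; exact hd⟩
  refine ⟨t'', htF, s, hs, ?_⟩
  have e : x - t'' - s = (x - x') + ((x' - s) - t'') := by ring
  rw [e]
  exact dvd_add hxx' hdvd

end CovAux

namespace CovAux

lemma eq_zero_of_dvd_of_abs_lt {p d : ℤ} (h : p ∣ d) (h2 : |d| < p) : d = 0 := by
  by_contra hd
  have h3 : p ∣ |d| := (dvd_abs p d).2 h
  have h4 : 0 < |d| := abs_pos.2 hd
  have := Int.le_of_dvd h4 h3
  omega

lemma window_card {p : ℤ} {B : Finset ℤ} (hp : 0 < p) (i : ℤ) :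
    ((Finset.Ioc i (i + p)).filter (fun t => ∃ v ∈ B, p ∣ t - v)).card ≤ B.card := by
  classical
  apply Finset.card_le_card_of_injOn
    (fun t => if h : ∃ v ∈ B, p ∣ t - v then h.choose else 0)
  · intro t ht
    rw [Finset.mem_coe, Finset.mem_filter] at ht
    simp only [ht.2, dif_pos]
    exact ht.2.choose_spec.1
  · intro t₁ ht₁ t₂ ht₂ heq
    rw [Finset.mem_coe, Finset.mem_filter, Finset.mem_Ioc] at ht₁ ht₂
    simp only [ht₁.2, ht₂.2, dif_pos] at heq
    have hd₁ := ht₁.2.choose_spec.2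
    have hd₂ := ht₂.2.choose_spec.2
    rw [heq] at hd₁
    have : p ∣ t₁ - t₂ := by
      have := dvd_sub hd₁ hd₂
      rw [show t₁ - ht₂.2.choose - (t₂ - ht₂.2.choose) = t₁ - t₂ from by ring] at this
      exact this
    have habs : |t₁ - t₂| < p := by
      rw [abs_lt]; omega
    have := eq_zero_of_dvd_of_abs_lt this habs
    omega

end CovAux

namespace CovAux

lemma prof_periodic {p : ℤ} {B : Finset ℤ} (i u : ℤ) :
    (∃ v ∈ B, p ∣ i + p + u - v) ↔ (∃ v ∈ B, p ∣ i + u - v) := by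
  constructor <;> rintro ⟨v, hv, hd⟩ <;> refine ⟨v, hv, ?_⟩
  · rw [show i + u - v = (i + p + u - v) + (-1) * p from by ring]
    exact dvd_add hd ⟨-1, by ring⟩
  · rw [show i + p + u - v = (i + u - v) + 1 * p from by ring]
    exact dvd_add hd ⟨1, by ring⟩

lemma reduce {S : Finset ℤ} {a b : ℤ} (ha : ∀ s ∈ S, a ≤ s) (hb : ∀ s ∈ S, s ≤ b) :
    ∀ (n : ℕ) (p : ℤ) (B : Finset ℤ), p.toNat = n → 0 < p → Cov S p B →
    ∃ (q : ℤ) (C : Finset ℤ), 0 < q ∧ q ≤ 2 ^ (b - a).toNat ∧ C ⊆ Finset.Ico 0 q ∧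
      Cov S q C ∧ (C.card : ℤ) * p ≤ (B.card : ℤ) * q := by
  classical
  intro n
  induction n using Nat.strong_induction_on with
  | _ n ih =>
    intro p B hn hp hCov
    by_cases hsmall : p ≤ 2 ^ (b - a).toNat
    · obtain ⟨h1, h2, h3⟩ := cov_norm hp hCov
      exact ⟨p, B.image (· % p), hp, hsmall, h2, h1, by
        have : ((B.image (· % p)).card : ℤ) ≤ (B.card : ℤ) := by exact_mod_cast h3
        nlinarith⟩
    · push_neg at hsmall
      -- pigeonhole on profiles
      set prof : ℤ → Finset ℤ :=
        fun i => (Finset.Ioc (0:ℤ) (b - a)).filter (fun u => ∃ v ∈ B, p ∣ i + u - v)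
        with hprofdef
      have hmaps : ∀ i ∈ Finset.Ico (0:ℤ) p,
          prof i ∈ (Finset.Ioc (0:ℤ) (b - a)).powerset := by
        intro i _
        exact Finset.mem_powerset.2 (Finset.filter_subset _ _)
      have hcard : ((Finset.Ioc (0:ℤ) (b - a)).powerset).card < (Finset.Ico (0:ℤ) p).card := by
        rw [Finset.card_powerset, Int.card_Ioc, Int.card_Ico]
        simp only [sub_zero]
        have hcast : ((2 ^ (b - a).toNat : ℕ) : ℤ) = (2:ℤ) ^ (b - a).toNat := by push_cast; ring
        omega
      obtain ⟨i, hi, j, hj, hne, heq⟩ :=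
        Finset.exists_ne_map_eq_of_card_lt_of_maps_to hcard hmaps
      rw [Finset.mem_Ico] at hi hj
      -- wlog i < j
      wlog hij : i < j generalizing i j
      · exact this j hj i hi hne.symm heq.symm (by omega)
      have hprof_iff : ∀ i' j', prof i' = prof j' → ∀ u, 0 < u → u ≤ b - a →
          ((∃ v ∈ B, p ∣ i' + u - v) ↔ (∃ v ∈ B, p ∣ j' + u - v)) := by
        intro i' j' hpe u hu1 hu2
        have h1 : (u ∈ prof i') ↔ (u ∈ prof j') := by rw [hpe]
        simpa [hprofdef, Finset.mem_filter, Finset.mem_Ioc, hu1, hu2] using h1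
      -- first block (i, j]
      have hcov1 := splice hCov ha hb hij (hprof_iff i j heq)
      -- second block (j, i + p]
      have hjip : j < i + p := by omega
      have hprof2 : prof j = prof (i + p) := by
        have : prof (i + p) = prof i := by
          ext u
          simp only [hprofdef, Finset.mem_filter, Finset.mem_Ioc]
          rw [prof_periodic]
        rw [this, heq]
      have hcov2 := splice hCov ha hb hjip (hprof_iff j (i + p) hprof2)
      set B₁ := (Finset.Ioc i j).filter (fun t => ∃ v ∈ B, p ∣ t - v) with hB₁
      set B₂ := (Finset.Ioc j (i + p)).filter (fun t => ∃ v ∈ B, p ∣ t - v) with hB₂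
      have hsum : B₁.card + B₂.card ≤ B.card := by
        have hdisj : Disjoint B₁ B₂ := by
          apply Finset.disjoint_filter_filter
          rw [Finset.disjoint_left]
          intro x hx hx'
          rw [Finset.mem_Ioc] at hx hx'
          omega
        have hunion : B₁ ∪ B₂ = (Finset.Ioc i (i + p)).filter (fun t => ∃ v ∈ B, p ∣ t - v) := by
          rw [hB₁, hB₂, ← Finset.filter_union, Finset.Ioc_union_Ioc_eq_Ioc hij.le hjip.le]
        calc B₁.card + B₂.card = (B₁ ∪ B₂).card := (Finset.card_union_of_disjoint hdisj).symm
          _ ≤ B.card := by rw [hunion]; exact window_card hp i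
      -- mediant
      set q₁ := j - i with hq₁def
      set q₂ := i + p - j with hq₂def
      have hq₁ : 0 < q₁ := by omega
      have hq₂ : 0 < q₂ := by omega
      have hqsum : q₁ + q₂ = p := by ring
      have hmed : (B₁.card : ℤ) * p ≤ (B.card : ℤ) * q₁ ∨
          (B₂.card : ℤ) * p ≤ (B.card : ℤ) * q₂ := by
        by_contra hcon
        push_neg at hcon
        have hsum' : (B₁.card : ℤ) + (B₂.card : ℤ) ≤ (B.card : ℤ) := by exact_mod_cast hsum
        nlinarith [hcon.1, hcon.2]
      rcases hmed with hc | hc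
      · obtain ⟨q, C, h1, h2, h3, h4, h5⟩ :=
          ih q₁.toNat (by omega) q₁ B₁ rfl hq₁ hcov1
        refine ⟨q, C, h1, h2, h3, h4, ?_⟩
        have e1 : (C.card : ℤ) * q₁ * p ≤ (B₁.card : ℤ) * q * p :=
          mul_le_mul_of_nonneg_right h5 hp.le
        have e2 : (B₁.card : ℤ) * p * q ≤ (B.card : ℤ) * q₁ * q :=
          mul_le_mul_of_nonneg_right hc h1.le
        have e3 : q₁ * ((C.card : ℤ) * p) ≤ q₁ * ((B.card : ℤ) * q) := by nlinarith
        exact le_of_mul_le_mul_left e3 hq₁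
      · obtain ⟨q, C, h1, h2, h3, h4, h5⟩ :=
          ih q₂.toNat (by omega) q₂ B₂ rfl hq₂ hcov2
        refine ⟨q, C, h1, h2, h3, h4, ?_⟩
        have e1 : (C.card : ℤ) * q₂ * p ≤ (B₂.card : ℤ) * q * p :=
          mul_le_mul_of_nonneg_right h5 hp.le
        have e2 : (B₂.card : ℤ) * p * q ≤ (B.card : ℤ) * q₂ * q :=
          mul_le_mul_of_nonneg_right hc h1.le
        have e3 : q₂ * ((C.card : ℤ) * p) ≤ q₂ * ((B.card : ℤ) * q) := by nlinarith
        exact le_of_mul_le_mul_left e3 hq₂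

end CovAux

namespace CovAux

lemma tauZ_le_card {S : Finset ℤ} {n : ℕ} {T : Finset ℤ}
    (h : Finset.Icc (1 : ℤ) n ⊆ T + S) : tauZ S n ≤ T.card :=
  Nat.sInf_le ⟨T, rfl, h⟩

lemma covDens_le_tau (S : Finset ℤ) (n : ℕ+) : covDens S ≤ (tauZ S n : ℝ) / n := by
  apply ciInf_le
  refine ⟨0, ?_⟩
  rintro x ⟨m, rfl⟩
  positivity

lemma covDens_le_ratio (S : Finset ℤ) (hS : S.Nonempty) {p : ℤ} {B : Finset ℤ}
    (hp : 0 < p) (hB : B ⊆ Finset.Ico 0 p) (hcov : Cov S p B) :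
    covDens S ≤ (B.card : ℝ) / (p : ℝ) := by
  classical
  set a := S.min' hS with hadef
  set b := S.max' hS with hbdef
  set M : ℤ := |a| + |b| + p with hMdef
  have habsa := abs_nonneg a
  have habsb := abs_nonneg b
  have hM1 : 1 ≤ M := by omega
  have key : ∀ k : ℕ, 0 < k →
      (tauZ S (k * p.toNat) : ℤ) ≤ (B.card : ℤ) * ((k : ℤ) + 2 * M + 1) := by
    intro k hk
    set T := ((B ×ˢ Finset.Icc (-M) ((k : ℤ) + M)).image
      (fun pr : ℤ × ℤ => pr.1 + pr.2 * p)) with hT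
    have hsub : Finset.Icc (1 : ℤ) ((k * p.toNat : ℕ) : ℤ) ⊆ T + S := by
      intro x hx
      rw [Finset.mem_Icc] at hx
      have hxn : ((k * p.toNat : ℕ) : ℤ) = (k : ℤ) * p := by
        push_cast [Int.toNat_of_nonneg hp.le]; ring
      rw [hxn] at hx
      obtain ⟨u, hu, s, hs, hd⟩ := hcov x
      have hu' := hB hu
      rw [Finset.mem_Ico] at hu'
      have hsa : a ≤ s := S.min'_le s hs
      have hsb : s ≤ b := S.le_max' s hs
      set m := (x - u - s) / p with hm
      have hmp : p * m = x - u - s := Int.mul_ediv_cancel' hd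
      have habs1 : -|a| ≤ a := neg_abs_le a
      have habs2 : b ≤ |b| := le_abs_self b
      have hMp : M ≤ M * p := le_mul_of_one_le_right (by omega) hp
      have hmlow : -M ≤ m := by
        have h1 : (-M) * p ≤ m * p := by nlinarith [hx.1, hu'.2, hmp]
        exact le_of_mul_le_mul_right h1 hp
      have hmhigh : m ≤ (k : ℤ) + M := by
        have h1 : m * p ≤ ((k : ℤ) + M) * p := by nlinarith [hx.2, hu'.1, hmp]
        exact le_of_mul_le_mul_right h1 hp
      have hmem : u + m * p ∈ T := by
        rw [hT]
        exact Finset.mem_image.2 ⟨(u, m),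
          Finset.mem_product.2 ⟨hu, Finset.mem_Icc.2 ⟨hmlow, hmhigh⟩⟩, rfl⟩
      have hx2 : x = u + m * p + s := by linarith [hmp]
      rw [hx2]
      exact Finset.add_mem_add hmem hs
    have hcard : (T.card : ℤ) ≤ (B.card : ℤ) * ((k : ℤ) + 2 * M + 1) := by
      have h1 : T.card ≤ B.card * (Finset.Icc (-M) ((k : ℤ) + M)).card := by
        rw [hT]
        exact Finset.card_image_le.trans (le_of_eq (Finset.card_product _ _))
      have h2 : (Finset.Icc (-M) ((k : ℤ) + M)).card = ((k : ℤ) + 2 * M + 1).toNat := by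
        rw [Int.card_Icc]
        congr 1
        ring
      rw [h2] at h1
      have h3 : (((k : ℤ) + 2 * M + 1).toNat : ℤ) = (k : ℤ) + 2 * M + 1 := by
        rw [Int.toNat_of_nonneg (by omega)]
      calc (T.card : ℤ) ≤ (B.card : ℤ) * (((k : ℤ) + 2 * M + 1).toNat : ℤ) := by
            exact_mod_cast h1
        _ = (B.card : ℤ) * ((k : ℤ) + 2 * M + 1) := by rw [h3]
    exact le_trans (by exact_mod_cast tauZ_le_card hsub) hcard
  have hppos : (0 : ℝ) < (p : ℝ) := by exact_mod_cast hp
  have hMR : (1 : ℝ) ≤ (M : ℝ) := by exact_mod_cast hM1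
  have hcd : ∀ k : ℕ, 0 < k →
      covDens S ≤ ((B.card : ℝ) * ((k : ℝ) + 2 * (M : ℝ) + 1)) / ((k : ℝ) * (p : ℝ)) := by
    intro k hk
    have hptn : 0 < p.toNat := by omega
    have hn : 0 < k * p.toNat := Nat.mul_pos hk hptn
    have h1 := covDens_le_tau S ⟨k * p.toNat, hn⟩
    refine h1.trans ?_
    have hkey := key k hk
    have hpt : ((p.toNat : ℕ) : ℝ) = (p : ℝ) := by exact_mod_cast Int.toNat_of_nonneg hp.le
    show ((tauZ S (k * p.toNat) : ℕ) : ℝ) / ((k * p.toNat : ℕ) : ℝ) ≤ _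
    rw [Nat.cast_mul, hpt]
    have hden : (0 : ℝ) < (k : ℝ) * (p : ℝ) := by positivity
    rw [div_le_div_iff₀ hden hden]
    have hnum : ((tauZ S (k * p.toNat) : ℕ) : ℝ) ≤ (B.card : ℝ) * ((k : ℝ) + 2 * (M : ℝ) + 1) := by
      exact_mod_cast hkey
    nlinarith [hnum, hden]
  apply le_of_forall_pos_le_add
  intro ε hε
  obtain ⟨k₀, hk₀⟩ := exists_nat_gt (((B.card : ℝ) * (2 * (M : ℝ) + 1)) / (ε * (p : ℝ)))
  set k : ℕ := k₀ + 1 with hkdef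
  have hkpos : 0 < k := Nat.succ_pos _
  have hkR : (0 : ℝ) < (k : ℝ) := by exact_mod_cast hkpos
  have hkgt : ((B.card : ℝ) * (2 * (M : ℝ) + 1)) / (ε * (p : ℝ)) < (k : ℝ) := by
    have : (k₀ : ℝ) < (k : ℝ) := by exact_mod_cast Nat.lt_succ_self k₀
    linarith
  have hmain := hcd k hkpos
  refine hmain.trans ?_
  have hsplit : ((B.card : ℝ) * ((k : ℝ) + 2 * (M : ℝ) + 1)) / ((k : ℝ) * (p : ℝ)) =
      (B.card : ℝ) / (p : ℝ) + ((B.card : ℝ) * (2 * (M : ℝ) + 1)) / ((k : ℝ) * (p : ℝ)) := by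
    field_simp
    ring
  rw [hsplit]
  have hsmall : ((B.card : ℝ) * (2 * (M : ℝ) + 1)) / ((k : ℝ) * (p : ℝ)) ≤ ε := by
    rw [div_le_iff₀ (by positivity)]
    rw [div_lt_iff₀ (by positivity)] at hkgt
    nlinarith
  linarith

end CovAux

namespace CovAux

lemma tau_spec (S : Finset ℤ) (hS : S.Nonempty) (n : ℕ) :
    ∃ T : Finset ℤ, T.card = tauZ S n ∧ Finset.Icc (1 : ℤ) n ⊆ T + S := by
  classical
  obtain ⟨s₀, hs₀⟩ := hS
  have hne : {m | ∃ T : Finset ℤ, T.card = m ∧ Finset.Icc (1 : ℤ) n ⊆ T + S}.Nonempty := by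
    refine ⟨((Finset.Icc (1 : ℤ) n).image (fun x => x - s₀)).card,
      (Finset.Icc (1 : ℤ) n).image (fun x => x - s₀), rfl, ?_⟩
    intro x hx
    have h1 : x - s₀ ∈ (Finset.Icc (1 : ℤ) n).image (fun x => x - s₀) :=
      Finset.mem_image_of_mem _ hx
    have h2 := Finset.add_mem_add h1 hs₀
    simpa using h2
  obtain ⟨T, hT1, hT2⟩ := Nat.sInf_mem hne
  exact ⟨T, hT1, hT2⟩

lemma cov_of_cover {S : Finset ℤ} {n : ℕ} (hn : 0 < n) {T : Finset ℤ}
    (h : Finset.Icc (1 : ℤ) n ⊆ T + S) : Cov S (n : ℤ) T := by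
  intro x
  have hq : (0 : ℤ) < n := by exact_mod_cast hn
  set x' := 1 + (x - 1) % (n : ℤ) with hx'
  have hmod := Int.emod_nonneg (x - 1) hq.ne'
  have hmod2 := Int.emod_lt_of_pos (x - 1) hq
  have hx'mem : x' ∈ Finset.Icc (1 : ℤ) n := Finset.mem_Icc.2 ⟨by omega, by omega⟩
  have := h hx'mem
  rw [Finset.mem_add] at this
  obtain ⟨t, ht, s, hs, hts⟩ := this
  refine ⟨t, ht, s, hs, ?_⟩
  have hdvd : (n : ℤ) ∣ x - x' := by
    have e : x - x' = (x - 1) - (x - 1) % (n : ℤ) := by omega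
    rw [e]
    exact Int.dvd_self_sub_emod
  have e2 : x - t - s = (x - x') + (x' - t - s) := by ring
  rw [e2]
  have e3 : x' - t - s = 0 := by omega
  rw [e3]
  simpa using hdvd

end CovAux

open CovAux

theorem covering_density_rational_periodic (S : Finset ℤ) (hS : S.Nonempty) :
    (∃ q : ℚ, covDens S = (q : ℝ)) ∧
    ∃ (ℓ : ℤ) (T : Set ℤ), 0 < ℓ ∧
      (∀ x : ℤ, x ∈ T ↔ x + ℓ ∈ T) ∧
      T + (S : Set ℤ) = Set.univ ∧
      ((T ∩ Set.Ico (0 : ℤ) ℓ).ncard : ℝ) / (ℓ : ℝ) = covDens S := by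
  classical
  set a := S.min' hS with hadef
  set b := S.max' hS with hbdef
  have ha : ∀ s ∈ S, a ≤ s := fun s hs => S.min'_le s hs
  have hb : ∀ s ∈ S, s ≤ b := fun s hs => S.le_max' s hs
  set P : ℤ := 2 ^ (b - a).toNat with hP
  have hPpos : 0 < P := by positivity
  set A : Set ℚ := {x : ℚ | ∃ q C, 0 < q ∧ q ≤ P ∧ C ⊆ Finset.Ico 0 q ∧ Cov S q C ∧
    x = (C.card : ℚ) / (q : ℚ)} with hA
  have hAfin : A.Finite := by
    apply Set.Finite.subset (((Finset.Icc (1 : ℤ) P ×ˢ Finset.Icc (0 : ℤ) P).finite_toSet).image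
      (fun pr : ℤ × ℤ => (pr.2 : ℚ) / (pr.1 : ℚ)))
    rintro x ⟨q, C, hq, hqP, hC, _, rfl⟩
    refine ⟨(q, (C.card : ℤ)), ?_, by simp⟩
    simp only [Finset.coe_product, Set.mem_prod, Finset.mem_coe, Finset.mem_Icc]
    have hcard : C.card ≤ q.toNat := by
      have := Finset.card_le_card hC
      simpa [Int.card_Ico] using this
    refine ⟨⟨hq, hqP⟩, ⟨by positivity, ?_⟩⟩
    omega
  have hAne : A.Nonempty := by
    obtain ⟨s₀, hs₀⟩ := hS
    refine ⟨1, 1, {0}, one_pos, by omega, by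
      rw [Finset.singleton_subset_iff, Finset.mem_Ico]; omega, ?_, by simp⟩
    intro x
    exact ⟨0, Finset.mem_singleton_self 0, s₀, hs₀, one_dvd _⟩
  obtain ⟨xm, hxmA, hxmin⟩ : ∃ xm ∈ A, ∀ y ∈ A, xm ≤ y := by
    obtain ⟨xm, h1, h2⟩ := Finset.exists_min_image hAfin.toFinset id
      (by rwa [Set.Finite.toFinset_nonempty])
    exact ⟨xm, hAfin.mem_toFinset.1 h1, fun y hy => h2 y (hAfin.mem_toFinset.2 hy)⟩
  obtain ⟨qm, Cm, hqm, hqmP, hCm, hcovm, hxmval⟩ := hxmA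
  -- covDens S = xm
  have hle : covDens S ≤ (xm : ℝ) := by
    have := covDens_le_ratio S hS hqm hCm hcovm
    rw [hxmval]
    push_cast
    exact this
  have hge : (xm : ℝ) ≤ covDens S := by
    apply le_ciInf
    intro n
    obtain ⟨T, hTcard, hTsub⟩ := tau_spec S hS n
    have hcovT : Cov S (n : ℤ) T := cov_of_cover n.pos hTsub
    have hnz : (0 : ℤ) < (n : ℤ) := by exact_mod_cast n.pos
    obtain ⟨hcovB, hBsub, hBcard⟩ := cov_norm hnz hcovT
    set B := T.image (· % (n : ℤ)) with hB
    obtain ⟨q, C, h1, h2, h3, h4, h5⟩ := reduce ha hb ((n : ℤ)).toNat (n : ℤ) B rfl hnz hcovB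
    have hyA : ((C.card : ℚ) / (q : ℚ)) ∈ A := ⟨q, C, h1, h2, h3, h4, rfl⟩
    have hxy : xm ≤ (C.card : ℚ) / (q : ℚ) := hxmin _ hyA
    have hyle : ((C.card : ℝ) / (q : ℝ)) ≤ (tauZ S n : ℝ) / ((n : ℕ) : ℝ) := by
      rw [div_le_div_iff₀ (by exact_mod_cast h1) (by exact_mod_cast n.pos)]
      have hc1 : (C.card : ℤ) * (n : ℤ) ≤ (B.card : ℤ) * q := h5
      have hc2 : (B.card : ℤ) ≤ (tauZ S n : ℤ) := by
        rw [← hTcard]; exact_mod_cast hBcard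
      have hc3 : (C.card : ℤ) * (n : ℤ) ≤ (tauZ S n : ℤ) * q := by
        calc (C.card : ℤ) * (n : ℤ) ≤ (B.card : ℤ) * q := hc1
          _ ≤ (tauZ S n : ℤ) * q := by
            exact mul_le_mul_of_nonneg_right hc2 h1.le
      exact_mod_cast hc3
    calc (xm : ℝ) ≤ ((C.card : ℚ) / (q : ℚ) : ℚ) := by exact_mod_cast hxy
      _ = (C.card : ℝ) / (q : ℝ) := by push_cast; ring
      _ ≤ _ := hyle
  have heq : covDens S = (xm : ℝ) := le_antisymm hle hge
  constructor
  · exact ⟨xm, heq⟩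
  -- the periodic set
  refine ⟨qm, {x : ℤ | ∃ u ∈ Cm, qm ∣ (x - u)}, hqm, ?_, ?_, ?_⟩
  · intro x
    constructor
    · rintro ⟨u, hu, hd⟩
      refine ⟨u, hu, ?_⟩
      rw [show x + qm - u = (x - u) + qm from by ring]
      exact dvd_add hd dvd_rfl
    · rintro ⟨u, hu, hd⟩
      refine ⟨u, hu, ?_⟩
      rw [show x - u = (x + qm - u) + (-1) * qm from by ring]
      exact dvd_add hd ⟨-1, by ring⟩
  · rw [Set.eq_univ_iff_forall]
    intro x
    obtain ⟨u, hu, s, hs, hd⟩ := hcovm x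
    rw [Set.mem_add]
    refine ⟨x - s, ⟨u, hu, by rw [show x - s - u = x - u - s from by ring]; exact hd⟩,
      s, Finset.mem_coe.2 hs, by ring⟩
  · have htrace : {x : ℤ | ∃ u ∈ Cm, qm ∣ (x - u)} ∩ Set.Ico (0 : ℤ) qm = (Cm : Set ℤ) := by
      ext x
      simp only [Set.mem_inter_iff, Set.mem_setOf_eq, Set.mem_Ico, Finset.mem_coe]
      constructor
      · rintro ⟨⟨u, hu, hd⟩, hx0, hxq⟩
        have hu' := hCm hu
        rw [Finset.mem_Ico] at hu'
        have : x - u = 0 := eq_zero_of_dvd_of_abs_lt hd (by rw [abs_lt]; omega)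
        have : x = u := by omega
        rwa [this]
      · intro hx
        have hx' := hCm hx
        rw [Finset.mem_Ico] at hx'
        exact ⟨⟨x, hx, by simp⟩, hx'.1, hx'.2⟩
    rw [htrace, Set.ncard_coe_finset, heq, hxmval]
    push_cast
    ring
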